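/- For any real numbers a and b, with S¹_a(σ)=sgn(cos(σ−a)), S²_b(σ)=−sgn(cos(σ−b)), T'_{1,a}(σ)=(√(2π)/4)|cos(σ−a)|, T'_{2,b}(σ)=√(2π), one has (1/(2π))·∫₀^{2π} S¹_a(σ)·S²_b(σ)·T'_{1,a}(σ)·T'_{2,b}(σ) dσ = −cos(a−b). -/

import Mathlib

open Real

lemma rsign_mul_abs (x : ℝ) : Real.sign x * |x| = x := by
  rcases lt_trichotomy x 0 with h | h | h
  · rw [Real.sign_of_neg h, abs_of_neg h]; ring
  · simp [h]
  · rw [Real.sign_of_pos h, abs_of_pos h]; ring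

lemma rsign_measurable : Measurable Real.sign := by
  unfold Real.sign
  exact Measurable.ite (measurableSet_lt measurable_id measurable_const) measurable_const
    (Measurable.ite (measurableSet_lt measurable_const measurable_id) measurable_const
      measurable_const)

lemma abs_rsign_le (x : ℝ) : |Real.sign x| ≤ 1 := by
  rcases Real.sign_apply_eq x with h | h | h <;> rw [h] <;> norm_num

lemma h_intble (c : ℝ) (t₁ t₂ : ℝ) :
    IntervalIntegrable (fun u => Real.sign (Real.cos u) * Real.cos (u - c))
      MeasureTheory.volume t₁ t₂ := by
  rw [intervalIntegrable_iff]
  apply MeasureTheory.Integrable.mono' (g := fun _ => (1 : ℝ))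
  · exact MeasureTheory.integrableOn_const measure_Ioc_lt_top.ne
  · exact ((rsign_measurable.comp Real.measurable_cos).mul
      ((Real.measurable_cos).comp (measurable_id.sub measurable_const))).aestronglyMeasurable
  · filter_upwards with x
    rw [Real.norm_eq_abs, abs_mul]
    calc |Real.sign (Real.cos x)| * |Real.cos (x - c)| ≤ 1 * 1 :=
          mul_le_mul (abs_rsign_le _) (Real.abs_cos_le_one _) (abs_nonneg _) zero_le_one
      _ = 1 := by ring

lemma cos_int (c p q : ℝ) :
    ∫ x in p..q, Real.cos (x - c) = Real.sin (q - c) - Real.sin (p - c) := by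
  rw [intervalIntegral.integral_comp_sub_right (fun x => Real.cos x) c,
    integral_cos]

lemma key (c : ℝ) :
    ∫ u in (0:ℝ)..(2 * π), Real.sign (Real.cos u) * Real.cos (u - c) = 4 * Real.cos c := by
  have hpi := Real.pi_pos
  have split1 := intervalIntegral.integral_add_adjacent_intervals
    (h_intble c 0 (π/2)) (h_intble c (π/2) (3*π/2))
  have split2 := intervalIntegral.integral_add_adjacent_intervals
    (h_intble c 0 (3*π/2)) (h_intble c (3*π/2) (2*π))
  have e1 : ∫ u in (0:ℝ)..(π/2), Real.sign (Real.cos u) * Real.cos (u - c)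
      = ∫ u in (0:ℝ)..(π/2), Real.cos (u - c) := by
    apply intervalIntegral.integral_congr_ae
    have hne : ∀ᵐ x : ℝ, x ≠ π/2 := by
      rw [MeasureTheory.ae_iff]
      convert Real.volume_singleton (a := π/2) using 2
      ext x; simp
    filter_upwards [hne] with x hx hmem
    rw [Set.uIoc_of_le (by linarith)] at hmem
    have hcos : 0 < Real.cos x :=
      Real.cos_pos_of_mem_Ioo ⟨by linarith [hmem.1], lt_of_le_of_ne hmem.2 hx⟩
    rw [Real.sign_of_pos hcos, one_mul]
  have e2 : ∫ u in (π/2)..(3*π/2), Real.sign (Real.cos u) * Real.cos (u - c)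
      = ∫ u in (π/2)..(3*π/2), -Real.cos (u - c) := by
    apply intervalIntegral.integral_congr_ae
    have hne : ∀ᵐ x : ℝ, x ≠ 3*π/2 := by
      rw [MeasureTheory.ae_iff]
      convert Real.volume_singleton (a := 3*π/2) using 2
      ext x; simp
    filter_upwards [hne] with x hx hmem
    rw [Set.uIoc_of_le (by linarith)] at hmem
    have hcos : Real.cos x < 0 :=
      Real.cos_neg_of_pi_div_two_lt_of_lt hmem.1
        (by rcases lt_of_le_of_ne hmem.2 hx with h; linarith)
    rw [Real.sign_of_neg hcos]; ring
  have e3 : ∫ u in (3*π/2)..(2*π), Real.sign (Real.cos u) * Real.cos (u - c)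
      = ∫ u in (3*π/2)..(2*π), Real.cos (u - c) := by
    apply intervalIntegral.integral_congr_ae
    filter_upwards with x hmem
    rw [Set.uIoc_of_le (by linarith)] at hmem
    have hcos : 0 < Real.cos x := by
      have : Real.cos x = Real.cos (x - 2*π) := (Real.cos_sub_two_pi x).symm
      rw [this]
      exact Real.cos_pos_of_mem_Ioo ⟨by linarith [hmem.1], by linarith [hmem.2]⟩
    rw [Real.sign_of_pos hcos, one_mul]
  have total : ∫ u in (0:ℝ)..(2*π), Real.sign (Real.cos u) * Real.cos (u - c)
      = (∫ u in (0:ℝ)..(π/2), Real.cos (u - c))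
        + (∫ u in (π/2)..(3*π/2), -Real.cos (u - c))
        + (∫ u in (3*π/2)..(2*π), Real.cos (u - c)) := by
    rw [← e1, ← e2, ← e3, ← split2, ← split1]
  rw [total, cos_int, intervalIntegral.integral_neg, cos_int, cos_int]
  have s1 : Real.sin (π/2 - c) = Real.cos c := Real.sin_pi_div_two_sub c
  have s2 : Real.sin (0 - c) = -Real.sin c := by rw [zero_sub, Real.sin_neg]
  have s3 : Real.sin (3*π/2 - c) = -Real.cos c := by
    have h : (3*π/2 - c) = (π/2 - c) + π := by ring
    rw [h, Real.sin_add_pi, Real.sin_pi_div_two_sub]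
  have s4 : Real.sin (2*π - c) = -Real.sin c := Real.sin_two_pi_sub c
  rw [s1, s2, s3, s4]; ring

theorem reduced_dynamics_epr (a b : ℝ) :
    (1 / (2 * π)) *
      ∫ σ in (0:ℝ)..(2 * π),
        Real.sign (Real.cos (σ - a)) * (-Real.sign (Real.cos (σ - b))) *
          ((Real.sqrt (2 * π) / 4) * |Real.cos (σ - a)|) * Real.sqrt (2 * π)
      = -Real.cos (a - b) := by
  have hpi := Real.pi_pos
  have hs : Real.sqrt (2 * π) * Real.sqrt (2 * π) = 2 * π :=
    Real.mul_self_sqrt (by positivity)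
  have hpt : ∀ σ : ℝ,
      Real.sign (Real.cos (σ - a)) * (-Real.sign (Real.cos (σ - b))) *
          ((Real.sqrt (2 * π) / 4) * |Real.cos (σ - a)|) * Real.sqrt (2 * π)
        = (-(π/2)) * (Real.sign (Real.cos (σ - b)) * Real.cos (σ - b - (a - b))) := by
    intro σ
    have h1 : Real.sign (Real.cos (σ - a)) * |Real.cos (σ - a)| = Real.cos (σ - a) :=
      rsign_mul_abs _
    have h2 : σ - b - (a - b) = σ - a := by ring
    rw [h2]
    calc Real.sign (Real.cos (σ - a)) * (-Real.sign (Real.cos (σ - b))) *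
          ((Real.sqrt (2 * π) / 4) * |Real.cos (σ - a)|) * Real.sqrt (2 * π)
        = -(Real.sqrt (2*π) * Real.sqrt (2*π) / 4) * (Real.sign (Real.cos (σ - b)) *
            (Real.sign (Real.cos (σ - a)) * |Real.cos (σ - a)|)) := by ring
      _ = (-(π/2)) * (Real.sign (Real.cos (σ - b)) * Real.cos (σ - a)) := by
            rw [hs, h1]; ring
  have : (∫ σ in (0:ℝ)..(2 * π),
        Real.sign (Real.cos (σ - a)) * (-Real.sign (Real.cos (σ - b))) *
          ((Real.sqrt (2 * π) / 4) * |Real.cos (σ - a)|) * Real.sqrt (2 * π))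
      = ∫ σ in (0:ℝ)..(2 * π),
          (-(π/2)) * (Real.sign (Real.cos (σ - b)) * Real.cos (σ - b - (a - b))) := by
    apply intervalIntegral.integral_congr
    intro σ _
    exact hpt σ
  rw [this, intervalIntegral.integral_const_mul]
  have hshift : (∫ σ in (0:ℝ)..(2 * π),
      Real.sign (Real.cos (σ - b)) * Real.cos (σ - b - (a - b)))
      = ∫ u in (0 - b)..(2 * π - b),
          Real.sign (Real.cos u) * Real.cos (u - (a - b)) := by
    exact intervalIntegral.integral_comp_sub_right
      (fun u => Real.sign (Real.cos u) * Real.cos (u - (a - b))) b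
  have hper : Function.Periodic
      (fun u => Real.sign (Real.cos u) * Real.cos (u - (a - b))) (2 * π) := by
    intro x
    simp only [Real.cos_add_two_pi, add_sub_right_comm, Real.cos_add_two_pi]
  have hper_eq : (∫ u in (0 - b)..(2 * π - b),
        Real.sign (Real.cos u) * Real.cos (u - (a - b)))
      = ∫ u in (0:ℝ)..(2 * π), Real.sign (Real.cos u) * Real.cos (u - (a - b)) := by
    have := hper.intervalIntegral_add_eq (-b) 0
    simpa [sub_eq_add_neg, add_comm, zero_sub] using this
  rw [hshift, hper_eq, key]
  field_simp
  ring
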